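/- Let ψ : Λ → Λ' be a homomorphism of ℤ-modules with ker(ψ) = ℤ·S, where the symmetric bilinear form on Λ satisfies S.S = -2. Let τ' : Λ' → Λ' and σ : Λ → Λ be form-preserving homomorphisms with ψ∘σ = τ'∘ψ. If D ∈ Λ satisfies τ'(ψ(D)) = -ψ(D) and σ preserves the bilinear form (σ(x).σ(y) = x.y), then σ(D) = -D or σ(D) = -(D + (D.S)S). -/
import Mathlib


/-- If `σ` is an isometry of `Λ` compatible via `ψ` with an involution `τ'`
on `Λ'`, `ker ψ = ℤ·S` with `S.S = -2`, and `ψ D` is `τ'`-anti-invariant,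
then `σ D = -D` or `σ D = -(D + (D.S)S)`. -/
theorem anti_invariant_dichotomy {Λ Λ' : Type*} [AddCommGroup Λ] [Module ℤ Λ]
    [AddCommGroup Λ'] [Module ℤ Λ']
    (B : Λ →ₗ[ℤ] Λ →ₗ[ℤ] ℤ) (hsymm : ∀ x y, B x y = B y x)
    (ψ : Λ →ₗ[ℤ] Λ') (S : Λ)
    (hker : LinearMap.ker ψ = Submodule.span ℤ {S}) (hS : B S S = -2)
    (σ : Λ →ₗ[ℤ] Λ) (τ' : Λ' →ₗ[ℤ] Λ')
    (hcomm : ∀ x, ψ (σ x) = τ' (ψ x))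
    (hiso : ∀ x y, B (σ x) (σ y) = B x y)
    (D : Λ) (hD : τ' (ψ D) = -ψ D) :
    σ D = -D ∨ σ D = -(D + B D S • S) := by
  have hmem : σ D + D ∈ LinearMap.ker ψ := by
    simp [LinearMap.mem_ker, hcomm, hD]
  rw [hker, Submodule.mem_span_singleton] at hmem
  obtain ⟨n, hn⟩ := hmem
  have hσD := eq_sub_of_add_eq hn.symm
  have key : B (σ D) (σ D) = B D D := hiso D D
  rw [hσD] at key
  simp only [map_sub, map_smul, map_zsmul, LinearMap.sub_apply, LinearMap.smul_apply,
    smul_eq_mul, hS, hsymm S D] at key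
  have h2 : (2 : ℤ) * (n * (n + B D S)) = 0 := by linear_combination -key
  have hn0 : n * (n + B D S) = 0 := (mul_eq_zero.mp h2).resolve_left (by norm_num)
  rcases mul_eq_zero.mp hn0 with h | h
  · left
    rw [hσD, h, @zero_smul ℤ Λ _ _ (MulActionWithZero.toSMulWithZero ℤ Λ) S, zero_sub]
  · right
    have : n = -B D S := by omega
    rw [hσD, this]
    rw [neg_smul (B D S) S, neg_add, sub_eq_add_neg,
      ← Int.cast_smul_eq_zsmul (R := ℤ) (B D S) S, Int.cast_id]
    exact add_comm _ _
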